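/- For integers n ≥ m ≥ 3 with (m,n) ≠ (3,3), the graph K_m □ K_n has a connected safe set of size ⌈(mn−1)/2⌉ that is also a vertex cut. -/

import Mathlib

open SimpleGraph

noncomputable section

/-- The Cartesian (box) product of the complete graphs `K_m` and `K_n`. -/
def KK (m n : ℕ) : SimpleGraph (Fin m × Fin n) :=
  (⊤ : SimpleGraph (Fin m)) □ (⊤ : SimpleGraph (Fin n))

variable {V : Type*}

/-- `S` is a safe set of `G`: every component of `G[S]` is at least as large as
every component of `G - S` joined to it by an edge. -/
def IsSafeSet (G : SimpleGraph V) (S : Finset V) : Prop :=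
  ∀ C : (G.induce (S : Set V)).ConnectedComponent,
    ∀ D : (G.induce ((S : Set V)ᶜ)).ConnectedComponent,
      (∃ u ∈ C.supp, ∃ v ∈ D.supp, G.Adj u.1 v.1) →
        Nat.card D.supp ≤ Nat.card C.supp

/-- A connected safe set: a safe set inducing a connected subgraph. -/
def IsConnectedSafeSet (G : SimpleGraph V) (S : Finset V) : Prop :=
  IsSafeSet G S ∧ (G.induce (S : Set V)).Connected

/-- The safe number `s(G)`. -/
def safeNumber (G : SimpleGraph V) : ℕ :=
  sInf {k | ∃ S : Finset V, IsSafeSet G S ∧ S.card = k}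

/-- The connected safe number `cs(G)`. -/
def connectedSafeNumber (G : SimpleGraph V) : ℕ :=
  sInf {k | ∃ S : Finset V, IsConnectedSafeSet G S ∧ S.card = k}

/-- `S` is a vertex cut: `G - S` is disconnected. -/
def IsVertexCut (G : SimpleGraph V) (S : Finset V) : Prop :=
  ¬ (G.induce ((S : Set V)ᶜ)).Preconnected

end

namespace SafeAux

def idx (m n : ℕ) (p : Fin m × Fin n) : ℕ :=
  if p.1.val = 0 then (if p.2.val = 0 then m*n - 1 else p.2.val - 1)
  else if p.2.val = 0 then n - 2 + p.1.val
  else m + n - 2 + (p.1.val - 1)*(n-1) + (p.2.val - 1)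

lemma prod_id (m n : ℕ) (hm : 3 ≤ m) (hmn : m ≤ n) :
    (m-2)*(n-1) + m + 2*n = m*n + 2 := by
  obtain ⟨a, rfl⟩ : ∃ a, m = a + 2 := ⟨m-2, by omega⟩
  obtain ⟨b, rfl⟩ : ∃ b, n = b + 1 := ⟨n-1, by omega⟩
  simp only [Nat.add_sub_cancel]
  ring_nf

lemma hub (m n : ℕ) (hm : 3 ≤ m) (hmn : m ≤ n) (a b : ℕ) (ha : a < m) (hb : b < n)
    (ha1 : 1 ≤ a) (hb1 : 1 ≤ b) : (a-1)*(n-1) + (b-1) ≤ m*n - m - n := by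
  have h1 : (a-1)*(n-1) ≤ (m-2)*(n-1) := Nat.mul_le_mul_right _ (by omega)
  have h2 := prod_id m n hm hmn
  have h3n : 3 * n ≤ m * n := Nat.mul_le_mul_right n hm
  omega

lemma idx_lt (m n : ℕ) (hm : 3 ≤ m) (hmn : m ≤ n) (p : Fin m × Fin n) :
    idx m n p < m * n := by
  obtain ⟨⟨i, hi⟩, ⟨j, hj⟩⟩ := p
  unfold idx
  simp only
  have h3n : 3 * n ≤ m * n := Nat.mul_le_mul_right n hm
  have h9 : 9 ≤ m * n := le_trans (by omega) h3n
  split_ifs with h1 h2 h2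
  · omega
  · omega
  · omega
  · have := hub m n hm hmn i j hi hj (by omega) (by omega); omega

lemma idx_inj (m n : ℕ) (hm : 3 ≤ m) (hmn : m ≤ n) :
    Function.Injective (idx m n) := by
  rintro ⟨⟨i, hi⟩, ⟨j, hj⟩⟩ ⟨⟨i', hi'⟩, ⟨j', hj'⟩⟩ h
  unfold idx at h
  simp only at h
  have h3n : 3 * n ≤ m * n := Nat.mul_le_mul_right n hm
  have h9 : 9 ≤ m * n := le_trans (by omega) h3n
  suffices hs : i = i' ∧ j = j' by
    simp only [Prod.ext_iff, Fin.mk.injEq]; exact hs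
  have key : ∀ a b a' b' : ℕ, b < n-1 → b' < n-1 → a*(n-1)+b = a'*(n-1)+b' → a = a' ∧ b = b' := by
    intro a b a' b' hb hb' hh
    have hpos : 0 < n - 1 := by omega
    have e1 : (b + a*(n-1)) / (n-1) = a := by
      rw [Nat.add_mul_div_right _ _ hpos, Nat.div_eq_of_lt hb]; omega
    have e2 : (b' + a'*(n-1)) / (n-1) = a' := by
      rw [Nat.add_mul_div_right _ _ hpos, Nat.div_eq_of_lt hb']; omega
    have h3 : b + a*(n-1) = b' + a'*(n-1) := by omega
    rw [h3, e2] at e1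
    subst e1
    exact ⟨rfl, by omega⟩
  split_ifs at h with a1 a2 b1 b2 b1 b2 a2 b1 b2 b1 b2
  · omega
  · omega
  · omega
  · have := hub m n hm hmn i' j' hi' hj' (by omega) (by omega); omega
  · omega
  · omega
  · omega
  · have := hub m n hm hmn i' j' hi' hj' (by omega) (by omega); omega
  · omega
  · omega
  · omega
  · have := hub m n hm hmn i' j' hi' hj' (by omega) (by omega); omega
  · have := hub m n hm hmn i j hi hj (by omega) (by omega); omega
  · have := hub m n hm hmn i j hi hj (by omega) (by omega); omega
  · have := hub m n hm hmn i j hi hj (by omega) (by omega); omega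
  · have hk := key (i-1) (j-1) (i'-1) (j'-1) (by omega) (by omega) (by omega)
    omega

theorem card_fin_filter_lt (N K : ℕ) (h : K ≤ N) :
    (Finset.univ.filter (fun k : Fin N => (k:ℕ) < K)).card = K := by
  rw [Finset.card_filter, Fin.sum_univ_eq_sum_range (fun k => if k < K then 1 else 0)]
  have : ∀ M, (∑ i ∈ Finset.range M, if i < K then 1 else 0) = min K M := by
    intro M
    induction M with
    | zero => simp
    | succ M ih =>
      rw [Finset.sum_range_succ, ih]
      split_ifs <;> omega
  rw [this]; omega

/-- the safe set -/
def Sset (m n : ℕ) : Finset (Fin m × Fin n) :=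
  Finset.univ.filter (fun p => idx m n p < m*n/2)

lemma mem_Sset (m n : ℕ) (p : Fin m × Fin n) : p ∈ Sset m n ↔ idx m n p < m*n/2 := by
  simp [Sset]

lemma card_Sset (m n : ℕ) (hm : 3 ≤ m) (hmn : m ≤ n) : (Sset m n).card = m*n/2 := by
  have hb : Function.Bijective (fun p : Fin m × Fin n => (⟨idx m n p, idx_lt m n hm hmn p⟩ : Fin (m*n))) := by
    rw [Fintype.bijective_iff_injective_and_card]
    constructor
    · intro a b hab
      exact idx_inj m n hm hmn (by simpa [Fin.mk.injEq] using hab)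
    · simp
  let E := Equiv.ofBijective _ hb
  have : (Sset m n).card = (Finset.univ.filter (fun k : Fin (m*n) => (k:ℕ) < m*n/2)).card := by
    apply Finset.card_equiv E
    intro p
    simp [Sset, E, Equiv.ofBijective]
  rw [this, card_fin_filter_lt]
  exact Nat.div_le_self _ _

end SafeAux

namespace SafeAux

lemma KK_adj {m n : ℕ} (p q : Fin m × Fin n) :
    (KK m n).Adj p q ↔ (p.1 ≠ q.1 ∧ p.2 = q.2) ∨ (p.2 ≠ q.2 ∧ p.1 = q.1) := by
  simp [KK, boxProd_adj, and_comm]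

lemma mem_row {m n : ℕ} (hm : 3 ≤ m) (hmn : m ≤ n) {i : Fin m} {j : Fin n}
    (hi : i.val = 0) (hj : j.val ≠ 0) : (i, j) ∈ Sset m n := by
  rw [mem_Sset]
  have h3n : 3 * n ≤ m * n := Nat.mul_le_mul_right n hm
  simp [idx, hi, hj]
  omega

lemma mem_col {m n : ℕ} (hm : 3 ≤ m) (hmn : m ≤ n) {i : Fin m} {j : Fin n}
    (hi : i.val ≠ 0) (hj : j.val = 0) : (i, j) ∈ Sset m n := by
  rw [mem_Sset]
  have h3n : 3 * n ≤ m * n := Nat.mul_le_mul_right n hm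
  have h4 : 2*m + 2*n ≤ m*n + 4 := by
    obtain ⟨a, rfl⟩ : ∃ a, m = a + 3 := ⟨m-3, by omega⟩
    obtain ⟨b, rfl⟩ : ∃ b, n = b + 3 := ⟨n-3, by omega⟩
    have : (a+3)*(b+3) = a*b + 3*a + 3*b + 9 := by ring
    omega
  simp [idx, hi, hj]
  have him : i.val < m := i.isLt
  omega

lemma mem_11 {m n : ℕ} (hm : 3 ≤ m) (hmn : m ≤ n) (h2 : 2*m + 2*n ≤ m*n + 2)
    {i : Fin m} {j : Fin n} (hi : i.val = 1) (hj : j.val = 1) : (i, j) ∈ Sset m n := by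
  rw [mem_Sset]
  simp [idx, hi, hj]
  omega

lemma not_mem_00 {m n : ℕ} (hm : 3 ≤ m) (hmn : m ≤ n) {i : Fin m} {j : Fin n}
    (hi : i.val = 0) (hj : j.val = 0) : (i, j) ∉ Sset m n := by
  rw [mem_Sset]
  have h3n : 3 * n ≤ m * n := Nat.mul_le_mul_right n hm
  have h9 : 9 ≤ m * n := le_trans (by omega) h3n
  simp [idx, hi, hj]
  omega

lemma not_mem_corner {m n : ℕ} (hm : 3 ≤ m) (hmn : m ≤ n) {i : Fin m} {j : Fin n}
    (hi : i.val = m - 1) (hj : j.val = n - 1) : (i, j) ∉ Sset m n := by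
  rw [mem_Sset]
  have h3n : 3 * n ≤ m * n := Nat.mul_le_mul_right n hm
  have h9 : 9 ≤ m * n := le_trans (by omega) h3n
  have hp := prod_id m n hm hmn
  have hi0 : i.val ≠ 0 := by omega
  have hj0 : j.val ≠ 0 := by omega
  have hmm : m - 1 - 1 = m - 2 := by omega
  have hm10 : m - 1 ≠ 0 := by omega
  have hn10 : n - 1 ≠ 0 := by omega
  simp [idx, hi0, hj0, hi, hj, hmm, hm10, hn10]
  omega

lemma isolated_reachable {W : Type*} {G : SimpleGraph W} {u v : W}
    (h : ∀ w, ¬ G.Adj u w) (hr : G.Reachable u v) : u = v := by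
  obtain ⟨w⟩ := hr
  cases w with
  | nil => rfl
  | cons ha _ => exact absurd ha (h _)

end SafeAux

open SafeAux in
theorem exists_connected_safe_set_vertex_cut (m n : ℕ) (hm : 3 ≤ m) (hmn : m ≤ n)
    (hne : ¬ (m = 3 ∧ n = 3)) :
    ∃ S : Finset (Fin m × Fin n), IsConnectedSafeSet (KK m n) S ∧
      IsVertexCut (KK m n) S ∧ S.card = (m * n - 1 + 1) / 2 := by
  classical
  have h3n : 3 * n ≤ m * n := Nat.mul_le_mul_right n hm
  have h9 : 9 ≤ m * n := le_trans (by omega) h3n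
  have h2 : 2*m + 2*n ≤ m*n + 2 := by
    obtain ⟨a, rfl⟩ : ∃ a, m = a + 3 := ⟨m-3, by omega⟩
    obtain ⟨b, rfl⟩ : ∃ b, n = b + 3 := ⟨n-3, by omega⟩
    have : (a+3)*(b+3) = a*b + 3*a + 3*b + 9 := by ring
    have hab : ¬ (a = 0 ∧ b = 0) := by simpa using hne
    omega
  set V : Type := Fin m × Fin n with hV
  set S : Finset (Fin m × Fin n) := Sset m n with hS
  -- special vertices
  have hm0 : 0 < m := by omega
  have hm1 : 1 < m := by omega
  have hn0 : 0 < n := by omega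
  have hn1 : 1 < n := by omega
  set i0 : Fin m := ⟨0, hm0⟩ with hi0
  set i1 : Fin m := ⟨1, hm1⟩ with hi1
  set j0 : Fin n := ⟨0, hn0⟩ with hj0
  set j1 : Fin n := ⟨1, hn1⟩ with hj1
  -- connectivity of induced graph on S
  have hub_mem : ((i0, j1) : Fin m × Fin n) ∈ (S : Set (Fin m × Fin n)) :=
    Finset.mem_coe.mpr (mem_row hm hmn rfl (by simp [hj1]))
  have hconn : ((KK m n).induce (S : Set (Fin m × Fin n))).Connected := by
    have hadj : ∀ a b : (S : Set (Fin m × Fin n)),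
        (KK m n).Adj a.1 b.1 → ((KK m n).induce (S : Set (Fin m × Fin n))).Adj a b :=
      fun _ _ h => h
    set hub : (S : Set (Fin m × Fin n)) := ⟨(i0, j1), hub_mem⟩ with hhub
    have H : ∀ v : (S : Set (Fin m × Fin n)),
        ((KK m n).induce (S : Set (Fin m × Fin n))).Reachable v hub := by
      rintro ⟨⟨i, j⟩, hv⟩
      have hvS : (i, j) ∈ S := hv
      by_cases hi : i.val = 0
      · have hj : j.val ≠ 0 := fun h0 => not_mem_00 hm hmn hi h0 hvS
        by_cases hj1' : j.val = 1
        · have : (⟨(i, j), hv⟩ : (S : Set (Fin m × Fin n))) = hub := by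
            apply Subtype.ext
            simp [hhub, Prod.ext_iff, Fin.ext_iff, hi, hj1', hi0, hj1]
          rw [this]
        · refine (hadj _ hub ?_).reachable
          rw [KK_adj]
          exact Or.inr ⟨by simp [hhub, hj1, Fin.ext_iff, hj1'], by simp [hhub, hi0, Fin.ext_iff, hi]⟩
      · -- i ≠ 0
        have h10S : ((i1, j0) : Fin m × Fin n) ∈ (S : Set (Fin m × Fin n)) :=
          Finset.mem_coe.mpr (mem_col hm hmn (by simp [hi1]) rfl)
        have h11S : ((i1, j1) : Fin m × Fin n) ∈ (S : Set (Fin m × Fin n)) :=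
          Finset.mem_coe.mpr (mem_11 hm hmn h2 rfl rfl)
        by_cases hj : j.val = 0
        · -- column vertex
          have r23 : ((KK m n).induce (S : Set (Fin m × Fin n))).Adj ⟨(i1, j0), h10S⟩ ⟨(i1, j1), h11S⟩ := by
            apply hadj
            rw [KK_adj]
            exact Or.inr ⟨by simp [hj0, hj1, Fin.ext_iff], rfl⟩
          have r34 : ((KK m n).induce (S : Set (Fin m × Fin n))).Adj ⟨(i1, j1), h11S⟩ hub := by
            apply hadj
            rw [KK_adj]
            exact Or.inl ⟨by simp [hi0, hi1, Fin.ext_iff], rfl⟩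
          have base : ((KK m n).induce (S : Set (Fin m × Fin n))).Reachable ⟨(i1, j0), h10S⟩ hub :=
            r23.reachable.trans r34.reachable
          by_cases hi1' : i.val = 1
          · have : (⟨(i, j), hv⟩ : (S : Set (Fin m × Fin n))) = ⟨(i1, j0), h10S⟩ := by
              apply Subtype.ext
              simp [Prod.ext_iff, Fin.ext_iff, hi1', hj, hi1, hj0]
            rw [this]; exact base
          · refine Reachable.trans ?_ base
            refine (hadj _ _ ?_).reachable
            rw [KK_adj]
            exact Or.inl ⟨by simp [hi1, Fin.ext_iff, hi1'], by simp [hj0, Fin.ext_iff, hj]⟩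
        · -- inner vertex
          have h0jS : ((i0, j) : Fin m × Fin n) ∈ (S : Set (Fin m × Fin n)) :=
            Finset.mem_coe.mpr (mem_row hm hmn rfl hj)
          have s1 : ((KK m n).induce (S : Set (Fin m × Fin n))).Adj ⟨(i, j), hv⟩ ⟨(i0, j), h0jS⟩ := by
            apply hadj
            rw [KK_adj]
            exact Or.inl ⟨by simp [hi0, Fin.ext_iff, hi], rfl⟩
          by_cases hj1' : j.val = 1
          · have : (⟨(i0, j), h0jS⟩ : (S : Set (Fin m × Fin n))) = hub := by
              apply Subtype.ext
              simp [hhub, Prod.ext_iff, Fin.ext_iff, hj1', hj1]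
            rw [← this]; exact s1.reachable
          · refine s1.reachable.trans (Adj.reachable ?_)
            apply hadj
            rw [KK_adj]
            exact Or.inr ⟨by simp [hhub, hj1, Fin.ext_iff, hj1'], rfl⟩
    rw [connected_iff]
    exact ⟨fun u v => (H u).trans (H v).symm, ⟨⟨(i0, j1), hub_mem⟩⟩⟩
  -- the isolated corner in the complement
  have h00c : ((i0, j0) : Fin m × Fin n) ∈ ((S : Set (Fin m × Fin n))ᶜ) := by
    simp only [Set.mem_compl_iff, Finset.mem_coe]
    exact not_mem_00 hm hmn rfl rfl
  set z0 : ((S : Set (Fin m × Fin n))ᶜ : Set (Fin m × Fin n)) := ⟨(i0, j0), h00c⟩ with hz0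
  have hiso : ∀ w, ¬ ((KK m n).induce ((S : Set (Fin m × Fin n))ᶜ)).Adj z0 w := by
    rintro ⟨⟨a, b⟩, hw⟩ hadj
    have hKKa : (KK m n).Adj (i0, j0) (a, b) := hadj
    rw [KK_adj] at hKKa
    simp [Fin.ext_iff, hi0, hj0, ne_eq] at hKKa
    rcases hKKa with ⟨ha, hb⟩ | ⟨hb, ha⟩
    · exact hw (Finset.mem_coe.mpr (mem_col hm hmn (by omega) (by omega)))
    · exact hw (Finset.mem_coe.mpr (mem_row hm hmn (by omega) (by omega)))
  have hcard : S.card = m * n / 2 := card_Sset m n hm hmn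
  refine ⟨S, ⟨?_, hconn⟩, ?_, ?_⟩
  · -- safe set
    intro C D _
    -- card of C.supp is S.card
    have hCsupp : C.supp = Set.univ := by
      apply Set.eq_univ_of_forall
      intro x
      obtain ⟨y, rfl⟩ := C.exists_rep
      change ((KK m n).induce (S : Set (Fin m × Fin n))).connectedComponentMk x = ((KK m n).induce (S : Set (Fin m × Fin n))).connectedComponentMk y
      exact ConnectedComponent.sound (hconn.preconnected x y)
    have hCcard : Nat.card C.supp = S.card := by
      rw [hCsupp]
      rw [Nat.card_coe_set_eq, Set.ncard_univ, Nat.card_eq_fintype_card,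
        ← Set.toFinset_card]
      simp
    rw [hCcard, hcard]
    by_cases hz : z0 ∈ D.supp
    · have hDsupp : D.supp = {z0} := by
        apply Set.eq_singleton_iff_unique_mem.mpr
        refine ⟨hz, fun x hx => ?_⟩
        rw [ConnectedComponent.mem_supp_iff] at hx hz
        have hr : ((KK m n).induce ((S : Set (Fin m × Fin n))ᶜ)).Reachable z0 x :=
          ConnectedComponent.exact (hz.trans hx.symm)
        exact (isolated_reachable hiso hr).symm
      rw [hDsupp]
      simp only [Nat.card_unique, Nat.card_coe_set_eq, Set.ncard_singleton]
      omega
    · have himg : Subtype.val '' D.supp ⊆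
          ↑((Finset.univ \ S).erase ((i0, j0) : Fin m × Fin n)) := by
        rintro _ ⟨x, hx, rfl⟩
        simp only [Finset.coe_erase, Finset.coe_sdiff, Finset.coe_univ,
          Set.mem_diff, Set.mem_singleton_iff]
        refine ⟨⟨trivial, x.2⟩, fun hxe => hz ?_⟩
        have : x = z0 := Subtype.ext hxe
        rwa [← this]
      have hle : Nat.card D.supp ≤ ((Finset.univ \ S).erase ((i0, j0) : Fin m × Fin n)).card := by
        rw [← Nat.card_image_of_injective Subtype.val_injective D.supp]
        rw [Nat.card_coe_set_eq]
        calc (Subtype.val '' D.supp).ncard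
            ≤ (↑((Finset.univ \ S).erase ((i0, j0) : Fin m × Fin n)) : Set (Fin m × Fin n)).ncard :=
              Set.ncard_le_ncard himg (Set.toFinite _)
          _ = ((Finset.univ \ S).erase ((i0, j0) : Fin m × Fin n)).card := Set.ncard_coe_finset _
      have hcard2 : ((Finset.univ \ S).erase ((i0, j0) : Fin m × Fin n)).card = m*n - S.card - 1 := by
        rw [Finset.card_erase_of_mem, Finset.card_sdiff_of_subset (Finset.subset_univ _)]
        · rw [Finset.card_univ]
          simp
        · rw [Finset.mem_sdiff]
          exact ⟨Finset.mem_univ _, not_mem_00 hm hmn rfl rfl⟩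
      rw [hcard2, hcard] at hle
      omega
  · -- vertex cut
    intro hpre
    have hcc : ((⟨m-1, by omega⟩ : Fin m), (⟨n-1, by omega⟩ : Fin n)) ∈ ((S : Set (Fin m × Fin n))ᶜ) := by
      simp only [Set.mem_compl_iff, Finset.mem_coe]
      exact not_mem_corner hm hmn rfl rfl
    have := isolated_reachable hiso (hpre z0 ⟨_, hcc⟩)
    have h01 : ((i0, j0) : Fin m × Fin n) = ((⟨m-1, by omega⟩ : Fin m), (⟨n-1, by omega⟩ : Fin n)) :=
      congrArg Subtype.val this
    simp only [Prod.ext_iff, Fin.ext_iff, hi0, hj0] at h01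
    omega
  · rw [hcard]; congr 1; omega
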